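/- Let E be a topological graph with no singular vertices and fix n ≥ 1. Then B^n is closed in E^n if and only if V_n is closed in E^0. -/

import Mathlib

/-- A topological graph: vertex space `V`, edge space `E`, continuous range map `r`
and locally homeomorphic source map `s`. -/
structure TopGraph (V E : Type) [TopologicalSpace V] [TopologicalSpace E] where
  r : E → V
  s : E → V
  r_cont : Continuous r
  s_locHomeo : IsLocalHomeomorph s

namespace TopGraph

variable {V E : Type} [TopologicalSpace V] [TopologicalSpace E] (G : TopGraph V E)

/-- The predicate that `μ : Fin n → E` is a (finite) path. -/
def IsPathFn {n : ℕ} (μ : Fin n → E) : Prop :=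
  ∀ (i : ℕ) (h : i + 1 < n), G.s (μ ⟨i, Nat.lt_of_succ_lt h⟩) = G.r (μ ⟨i + 1, h⟩)

/-- The space `E^n` of paths of length `n`, with the subspace topology of the product. -/
def Path (n : ℕ) : Type := {μ : Fin n → E // G.IsPathFn μ}

instance (n : ℕ) : TopologicalSpace (G.Path n) :=
  inferInstanceAs (TopologicalSpace {μ : Fin n → E // G.IsPathFn μ})

/-- `r^n(μ) = r(μ₁)`. -/
def pathRange {n : ℕ} (hn : 0 < n) (μ : G.Path n) : V := G.r (μ.1 ⟨0, hn⟩)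

/-- `s^n(μ) = s(μₙ)`. -/
def pathSource {n : ℕ} (hn : 0 < n) (μ : G.Path n) : V :=
  G.s (μ.1 ⟨n - 1, Nat.sub_lt hn Nat.one_pos⟩)

/-- A cycle is a path whose range equals its source; its base point is its range. -/
def IsCycle {n : ℕ} (hn : 0 < n) (μ : G.Path n) : Prop :=
  G.pathRange hn μ = G.pathSource hn μ

/-- A path `μ ∈ E^n` has an entrance if some edge `e ≠ μᵢ` has `r(e) = r(μᵢ)`. -/
def HasEntrance {n : ℕ} (μ : G.Path n) : Prop :=
  ∃ (i : Fin n) (e : E), G.r e = G.r (μ.1 i) ∧ e ≠ μ.1 i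

theorem block_lt {n k : ℕ} (j : Fin k) (i : Fin n) : (j : ℕ) * n + (i : ℕ) < k * n := by
  have hi := i.2
  have hj := j.2
  calc (j : ℕ) * n + (i : ℕ) < ((j : ℕ) + 1) * n := by rw [Nat.add_mul, Nat.one_mul]; omega
    _ ≤ k * n := Nat.mul_le_mul (Nat.succ_le_of_lt hj) le_rfl

/-- The `j`-th block of length `n` of a path of length `k * n`. -/
def block {n k : ℕ} (α : G.Path (k * n)) (j : Fin k) : G.Path n :=
  ⟨fun i => α.1 ⟨(j : ℕ) * n + (i : ℕ), block_lt j i⟩,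
    fun i h => α.2 ((j : ℕ) * n + i) (block_lt j ⟨i + 1, h⟩)⟩

/-- `α ∈ kN` : every block of `α` lies in `N`. -/
def BlocksIn {n k : ℕ} (N : Set (G.Path n)) (α : G.Path (k * n)) : Prop :=
  ∀ j : Fin k, G.block α j ∈ N

/-- The set `B^n` of cycles of length `n` admitting `k ≥ 1` and an open neighbourhood `N`
satisfying conditions (1) and (2) of Notation 3.3. -/
def B (n : ℕ) (hn : 0 < n) : Set (G.Path n) :=
  {μ | G.IsCycle hn μ ∧
    ∃ (k : ℕ) (hk : 0 < k) (N : Set (G.Path n)), IsOpen N ∧ μ ∈ N ∧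
      (∀ α β : G.Path (k * n), G.BlocksIn N α → G.BlocksIn N β → α ≠ β →
        ¬ ∃ γ ∈ N, G.pathRange hn γ = G.pathSource (Nat.mul_pos hk hn) α ∧
          G.pathSource hn γ = G.pathSource (Nat.mul_pos hk hn) β) ∧
      (∀ α : G.Path (k * n), G.BlocksIn N α →
        ¬ ∃ γ ∈ N, G.IsCycle hn γ ∧ G.HasEntrance γ ∧
          G.pathRange hn γ = G.pathSource (Nat.mul_pos hk hn) α)}

/-- The infinite path space `E^∞`, with the subspace topology of the product. -/
def InfPath : Type := {x : ℕ → E // ∀ i : ℕ, G.s (x i) = G.r (x (i + 1))}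

instance : TopologicalSpace G.InfPath :=
  inferInstanceAs (TopologicalSpace {x : ℕ → E // ∀ i : ℕ, G.s (x i) = G.r (x (i + 1))})

/-- The one-sided shift on `E^∞`. -/
def shift (x : G.InfPath) : G.InfPath := ⟨fun i => x.1 (i + 1), fun i => x.2 (i + 1)⟩

/-- The segment `x_{a+1} ⋯ x_{a+len}` (0-indexed: edges `a, …, a+len-1`) of an infinite path. -/
def segment (x : G.InfPath) (a len : ℕ) : G.Path len :=
  ⟨fun i => x.1 (a + (i : ℕ)), fun i _ => x.2 (a + i)⟩

/-- The boundary path groupoid `Γ(E^∞, σ)` as a set. -/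
def Gamma : Type :=
  {g : G.InfPath × ℤ × G.InfPath //
    ∃ k l : ℕ, g.2.1 = (k : ℤ) - (l : ℤ) ∧ G.shift^[k] g.1 = G.shift^[l] g.2.2}

/-- Basic sets `U(U, W, k, l)` for the topology of `Γ(E^∞, σ)`. -/
def basicSet (U W : Set G.InfPath) (k l : ℕ) : Set G.Gamma :=
  {g | g.1.1 ∈ U ∧ g.1.2.2 ∈ W ∧ g.1.2.1 = (k : ℤ) - (l : ℤ) ∧
    G.shift^[k] g.1.1 = G.shift^[l] g.1.2.2}

/-- The topology on `Γ(E^∞, σ)` generated by the sets `U(U, W, k, l)` with `U, W` open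
and `σ^k`, `σ^l` injective on `U` resp. `W`. -/
instance : TopologicalSpace G.Gamma :=
  TopologicalSpace.generateFrom
    {S | ∃ (U W : Set G.InfPath) (k l : ℕ), IsOpen U ∧ IsOpen W ∧
      Set.InjOn (G.shift^[k]) U ∧ Set.InjOn (G.shift^[l]) W ∧ S = G.basicSet U W k l}

/-- The isotropy group bundle `Iso(Γ(E^∞, σ))`. -/
def isoSet : Set G.Gamma := {g | g.1.1 = g.1.2.2}

/-- The interior of the isotropy group bundle. -/
def isoInterior : Set G.Gamma := interior G.isoSet

/-- The set `E^0_fin` of finite receivers. -/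
def finRecv : Set V := {v | ∃ N : Set V, IsOpen N ∧ v ∈ N ∧ IsCompact (G.r ⁻¹' closure N)}

/-- The set `E^0_sce` of sources. -/
def sce : Set V := (closure (Set.range G.r))ᶜ

/-- The set `E^0_rg` of regular vertices. -/
def rg : Set V := G.finRecv \ closure G.sce

/-- The set `E^0_sg` of singular vertices. -/
def sg : Set V := G.rgᶜ

/-- The set `V_n` of vertices having an open neighbourhood consisting of base points of
cycles without entrances in `E^n`. -/
def Vset (n : ℕ) (hn : 0 < n) : Set V :=
  {v | ∃ W : Set V, IsOpen W ∧ v ∈ W ∧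
    ∀ w ∈ W, ∃ γ : G.Path n, G.IsCycle hn γ ∧ ¬ G.HasEntrance γ ∧ G.pathRange hn γ = w}

/-- `E` is topologically free if the set of base points of cycles without entrances has
empty interior. -/
def TopologicallyFree : Prop :=
  interior {v : V | ∃ (n : ℕ) (hn : 0 < n) (γ : G.Path n),
    G.IsCycle hn γ ∧ ¬ G.HasEntrance γ ∧ G.pathRange hn γ = v} = ∅

/-- The groupoid `Γ(E^∞, σ)` is essentially free if the set of units with trivial
isotropy is dense. -/
def EssentiallyFree : Prop :=
  Dense {x : G.InfPath | ∀ g : G.Gamma, g.1.1 = x → g.1.2.2 = x → g.1.2.1 = 0}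


open Filter Topology Set

lemma fin_app_congr {m : ℕ} {γ : Type} (g : Fin m → γ) {a b : ℕ} (ha : a < m) (hb : b < m)
    (h : a = b) : g ⟨a, ha⟩ = g ⟨b, hb⟩ := by subst h; rfl

lemma fin_mk_eq {n a b : ℕ} (ha : a < n) (hb : b < n) (h : a = b) :
    (⟨a, ha⟩ : Fin n) = ⟨b, hb⟩ := by subst h; rfl

lemma aux_mod {n : ℕ} (c t : ℕ) (ht : t < n) : (c * n + t) % n = t := by
  rw [Nat.add_comm, Nat.add_mul_mod_self_right, Nat.mod_eq_of_lt ht]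

lemma aux_s_cont : Continuous G.s := G.s_locHomeo.continuous

lemma aux_pathRange_cont {n : ℕ} (hn : 0 < n) : Continuous (G.pathRange (n := n) hn) :=
  G.r_cont.comp ((continuous_apply _).comp continuous_subtype_val)

lemma aux_pathSource_cont {n : ℕ} (hn : 0 < n) : Continuous (G.pathSource (n := n) hn) :=
  G.aux_s_cont.comp ((continuous_apply _).comp continuous_subtype_val)

lemma aux_noEnt {n : ℕ} {μ : G.Path n} (h : ¬ G.HasEntrance μ) :
    ∀ (i : Fin n) (e : E), G.r e = G.r (μ.1 i) → e = μ.1 i := by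
  intro i e he
  by_contra hne
  exact h ⟨i, e, he, hne⟩

lemma aux_wrap {n : ℕ} (hn : 0 < n) {μ : G.Path n} (hc : G.IsCycle hn μ) (a : ℕ) :
    G.s (μ.1 ⟨a % n, Nat.mod_lt a hn⟩) = G.r (μ.1 ⟨(a+1) % n, Nat.mod_lt _ hn⟩) := by
  have hlt : a % n < n := Nat.mod_lt a hn
  rcases Nat.lt_or_ge (a % n + 1) n with h | h
  · have h1 : (a+1) % n = a % n + 1 := by
      rw [← Nat.mod_add_mod, Nat.mod_eq_of_lt h]
    rw [μ.2 (a % n) h]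
    exact congrArg G.r (fin_app_congr μ.1 h _ h1.symm)
  · have h2 : a % n + 1 = n := by omega
    have h1 : (a+1) % n = 0 := by rw [← Nat.mod_add_mod, h2, Nat.mod_self]
    have hc' : G.r (μ.1 ⟨0, hn⟩) = G.s (μ.1 ⟨n - 1, Nat.sub_lt hn Nat.one_pos⟩) := hc
    have e1 : μ.1 ⟨a % n, hlt⟩ = μ.1 ⟨n - 1, Nat.sub_lt hn Nat.one_pos⟩ :=
      fin_app_congr μ.1 _ _ (by omega)
    have e2 : μ.1 ⟨(a+1) % n, Nat.mod_lt _ hn⟩ = μ.1 ⟨0, hn⟩ :=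
      fin_app_congr μ.1 _ _ h1
    rw [e1, e2, ← hc']

/-- `k`-fold repetition of a cycle. -/
def auxRep {n : ℕ} (hn : 0 < n) (k : ℕ) {μ : G.Path n} (hc : G.IsCycle hn μ) :
    G.Path (k * n) :=
  ⟨fun i => μ.1 ⟨(i : ℕ) % n, Nat.mod_lt _ hn⟩, fun i _ => G.aux_wrap hn hc i⟩

lemma auxRep_blocksIn {n k : ℕ} (hn : 0 < n) {μ : G.Path n} (hc : G.IsCycle hn μ)
    {N : Set (G.Path n)} (hμ : μ ∈ N) : G.BlocksIn N (G.auxRep hn k hc) := by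
  intro j
  have hb : G.block (G.auxRep hn k hc) j = μ := by
    apply Subtype.ext; funext i
    show μ.1 ⟨((j : ℕ) * n + (i : ℕ)) % n, _⟩ = μ.1 i
    have : μ.1 i = μ.1 ⟨(i : ℕ), i.2⟩ := rfl
    rw [this]
    exact fin_app_congr μ.1 _ _ (aux_mod _ _ i.2)
  rw [hb]; exact hμ

lemma auxRep_source {n k : ℕ} (hn : 0 < n) (hk : 0 < k) {μ : G.Path n} (hc : G.IsCycle hn μ) :
    G.pathSource (Nat.mul_pos hk hn) (G.auxRep hn k hc) = G.pathRange hn μ := by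
  show G.s (μ.1 ⟨(k * n - 1) % n, _⟩) = G.r (μ.1 ⟨0, hn⟩)
  have hkn : k * n = (k-1) * n + n := by
    conv_lhs => rw [show k = (k-1)+1 by omega]
    rw [Nat.add_mul, Nat.one_mul]
  have h1 : (k * n - 1) % n = n - 1 := by
    rw [show k*n - 1 = (k-1)*n + (n-1) by omega]
    exact aux_mod _ _ (by omega)
  have hc' : G.r (μ.1 ⟨0, hn⟩) = G.s (μ.1 ⟨n - 1, Nat.sub_lt hn Nat.one_pos⟩) := hc
  rw [hc']
  exact congrArg G.s (fin_app_congr μ.1 _ _ h1)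

lemma aux_force {n : ℕ} (hn : 0 < n) {δ : G.Path n} (hc : G.IsCycle hn δ)
    (hne : ¬ G.HasEntrance δ) {m : ℕ} (η : G.Path m) (hm : 0 < m)
    (hr : G.r (η.1 ⟨0, hm⟩) = G.pathRange hn δ) :
    ∀ (i : ℕ) (hi : i < m), η.1 ⟨i, hi⟩ = δ.1 ⟨i % n, Nat.mod_lt _ hn⟩ := by
  intro i
  induction i with
  | zero =>
    intro hi
    apply G.aux_noEnt hne ⟨0 % n, Nat.mod_lt _ hn⟩
    have h0 : δ.1 ⟨0 % n, Nat.mod_lt _ hn⟩ = δ.1 ⟨0, hn⟩ :=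
      fin_app_congr δ.1 _ _ (Nat.zero_mod n)
    rw [h0]
    exact hr
  | succ i ih =>
    intro hi
    have hδ := G.aux_wrap hn hc i
    have hη := η.2 i hi
    apply G.aux_noEnt hne ⟨(i+1) % n, Nat.mod_lt _ hn⟩
    rw [← hδ, ← ih (Nat.lt_of_succ_lt hi)]
    exact hη.symm


lemma aux_basic {n : ℕ} {N : Set (G.Path n)} (hN : IsOpen N) {μ : G.Path n} (hμ : μ ∈ N) :
    ∃ U : Fin n → Set E, (∀ i, IsOpen (U i)) ∧ (∀ i, μ.1 i ∈ U i) ∧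
      ∀ η : G.Path n, (∀ i, η.1 i ∈ U i) → η ∈ N := by
  obtain ⟨O, hO, hON⟩ := isOpen_induced_iff.mp hN
  have hμO : μ.1 ∈ O := by rw [← hON] at hμ; exact hμ
  obtain ⟨I, u, hu, hsub⟩ := isOpen_pi_iff.mp hO μ.1 hμO
  refine ⟨fun i => if i ∈ I then u i else Set.univ, ?_, ?_, ?_⟩
  · intro i
    by_cases h : i ∈ I
    · simpa [h] using (hu i h).1
    · simp [h]
  · intro i
    by_cases h : i ∈ I
    · simpa [h] using (hu i h).2
    · simp [h]
  · intro η hη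
    have : η.1 ∈ O := by
      apply hsub
      intro i hi
      have hi' : i ∈ I := hi
      have := hη i
      simp only [if_pos hi'] at this
      exact this
    rw [← hON]
    exact this

lemma aux_proper [T2Space V] [FirstCountableTopology V] [FirstCountableTopology E]
    {v : V} (hv : v ∈ G.finRecv) {U : Set E} (hU : IsOpen U)
    (hfib : G.r ⁻¹' {v} ⊆ U) : ∃ W, IsOpen W ∧ v ∈ W ∧ G.r ⁻¹' W ⊆ U := by
  by_contra hcon
  push_neg at hcon
  obtain ⟨Nv, hNv, hvNv, hK⟩ := hv
  obtain ⟨Bas, hBas⟩ := (𝓝 v).exists_antitone_basis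
  have hex : ∀ m : ℕ, ∃ e, G.r e ∈ Bas m ∩ Nv ∧ e ∉ U := by
    intro m
    have hm : Bas m ∩ Nv ∈ 𝓝 v := inter_mem (hBas.1.mem_of_mem trivial) (hNv.mem_nhds hvNv)
    obtain ⟨W, hWsub, hWopen, hvW⟩ := mem_nhds_iff.mp hm
    obtain ⟨e, he, heU⟩ := Set.not_subset.mp (hcon W hWopen hvW)
    exact ⟨e, hWsub he, heU⟩
  choose e he heU using hex
  have heK : ∀ m, e m ∈ G.r ⁻¹' closure Nv := fun m => subset_closure (he m).2
  have hrt : Tendsto (fun m => G.r (e m)) atTop (𝓝 v) :=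
    hBas.tendsto fun m => (he m).1
  obtain ⟨f, hfK, φ, hφ, hconv⟩ := hK.isSeqCompact heK
  have hrf : G.r f = v :=
    tendsto_nhds_unique ((G.r_cont.tendsto f).comp hconv) (hrt.comp hφ.tendsto_atTop)
  have hfU : f ∈ U := hfib (by simp [hrf])
  have : ∀ᶠ m in atTop, e (φ m) ∈ U := hconv.eventually (hU.mem_nhds hfU)
  obtain ⟨m, hm⟩ := this.exists
  exact heU (φ m) hm

lemma aux_recv [T2Space V] {v : V} (hv : v ∈ G.rg) :
    ∃ R, IsOpen R ∧ v ∈ R ∧ ∀ w ∈ R, ∃ e, G.r e = w := by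
  obtain ⟨⟨Nv, hNv, hvNv, hK⟩, hvs⟩ := hv
  refine ⟨Nv ∩ (closure G.sce)ᶜ, hNv.inter isClosed_closure.isOpen_compl, ⟨hvNv, hvs⟩, ?_⟩
  intro w hw
  have hwr : w ∈ closure (Set.range G.r) := by
    have : w ∉ G.sce := fun h => hw.2 (subset_closure h)
    simpa [TopGraph.sce] using this
  have hKc : IsCompact (G.r '' (G.r ⁻¹' closure Nv)) := hK.image G.r_cont
  have hcl : IsClosed (G.r '' (G.r ⁻¹' closure Nv)) := hKc.isClosed
  have hwK : w ∈ G.r '' (G.r ⁻¹' closure Nv) := by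
    rw [← hcl.closure_eq]
    rw [mem_closure_iff] at hwr ⊢
    intro o ho hwo
    obtain ⟨x, hx1, x0, hx0⟩ := hwr (o ∩ Nv) (ho.inter hNv) ⟨hwo, hw.1⟩
    subst hx0
    exact ⟨G.r x0, hx1.1, x0, subset_closure hx1.2, rfl⟩
  obtain ⟨x, _, hx⟩ := hwK
  exact ⟨x, hx⟩


lemma aux_B_noEnt {n : ℕ} (hn : 0 < n) {μ : G.Path n} (hμ : μ ∈ G.B n hn) :
    ¬ G.HasEntrance μ := by
  obtain ⟨hc, k, hk, N, hNo, hμN, h1, h2⟩ := hμ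
  intro hent
  exact h2 (G.auxRep hn k hc) (G.auxRep_blocksIn hn hc hμN)
    ⟨μ, hμN, hc, hent, (G.auxRep_source hn hk hc).symm⟩

lemma aux_memB {n : ℕ} (hn : 0 < n) {μ : G.Path n} (hc : G.IsCycle hn μ)
    (hV : G.pathRange hn μ ∈ G.Vset n hn) : μ ∈ G.B n hn := by
  obtain ⟨W, hWo, hμW, hW⟩ := hV
  have h1n : (0 : ℕ) < 1 * n := by omega
  -- the neighbourhood
  set N : Set (G.Path n) := G.pathRange hn ⁻¹' W with hNdef
  have hNo : IsOpen N := hWo.preimage (G.aux_pathRange_cont hn)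
  -- key forcing facts
  -- for a path ρ of length m with base in W, ρ is forced and (if m ≡ 0 [n]) its source is its base
  have force : ∀ (ρ : G.Path n), G.pathRange hn ρ ∈ W →
      (∃ δ : G.Path n, G.IsCycle hn δ ∧ ¬ G.HasEntrance δ ∧ ρ = δ) := by
    intro ρ hρ
    obtain ⟨δ, hδc, hδe, hδr⟩ := hW _ hρ
    refine ⟨δ, hδc, hδe, ?_⟩
    apply Subtype.ext; funext i
    have := G.aux_force hn hδc hδe ρ hn (by rw [hδr]; rfl) i i.2
    have hi : δ.1 ⟨(i : ℕ) % n, Nat.mod_lt _ hn⟩ = δ.1 i :=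
      fin_app_congr δ.1 _ i.2 (Nat.mod_eq_of_lt i.2)
    have heta : ρ.1 i = ρ.1 ⟨(i : ℕ), i.2⟩ := rfl
    rw [heta, this, hi]
  -- a kN-path of length 1*n : its base is in W, it is forced, and its source equals its base
  have force1 : ∀ (α : G.Path (1 * n)), G.BlocksIn N α →
      (G.pathRange h1n α ∈ W ∧ G.pathSource h1n α = G.pathRange h1n α ∧
        ∀ (β : G.Path (1 * n)), G.BlocksIn N β →
          G.pathRange h1n β = G.pathRange h1n α → β = α) := by
    intro α hα
    have hbl := hα ⟨0, Nat.one_pos⟩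
    have hblr : G.pathRange hn (G.block α ⟨0, Nat.one_pos⟩) = G.pathRange h1n α := by
      show G.r (α.1 ⟨(0:ℕ) * n + 0, _⟩) = G.r (α.1 ⟨0, h1n⟩)
      exact congrArg G.r (fin_app_congr α.1 _ _ (by omega))
    have hαW : G.pathRange h1n α ∈ W := by rw [← hblr]; exact hbl
    obtain ⟨δ, hδc, hδe, hδr⟩ := hW _ hαW
    have hforce := G.aux_force hn hδc hδe α h1n (by rw [hδr]; rfl)
    have hsrc : G.pathSource h1n α = G.pathRange h1n α := by
      show G.s (α.1 ⟨1 * n - 1, _⟩) = _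
      rw [hforce (1 * n - 1) (Nat.sub_lt h1n Nat.one_pos)]
      have : δ.1 ⟨(1 * n - 1) % n, Nat.mod_lt _ hn⟩ = δ.1 ⟨n - 1, Nat.sub_lt hn Nat.one_pos⟩ :=
        fin_app_congr δ.1 _ _ (by rw [Nat.mod_eq_of_lt (by omega)]; omega)
      rw [this]
      show G.pathSource hn δ = _
      rw [← hδc, hδr]
    refine ⟨hαW, hsrc, ?_⟩
    intro β hβ hβr
    have hforceβ := G.aux_force hn hδc hδe β h1n (by show G.pathRange h1n β = G.pathRange hn δ; rw [hβr, hδr])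
    apply Subtype.ext; funext i
    have h1 : β.1 ⟨(i : ℕ), i.2⟩ = δ.1 ⟨(i : ℕ) % n, Nat.mod_lt _ hn⟩ := hforceβ i i.2
    have h2 : α.1 ⟨(i : ℕ), i.2⟩ = δ.1 ⟨(i : ℕ) % n, Nat.mod_lt _ hn⟩ := hforce i i.2
    have heta1 : β.1 i = β.1 ⟨(i : ℕ), i.2⟩ := rfl
    have heta2 : α.1 i = α.1 ⟨(i : ℕ), i.2⟩ := rfl
    rw [heta1, heta2, h1, h2]
  refine ⟨hc, 1, Nat.one_pos, N, hNo, hμW, ?_, ?_⟩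
  · intro α β hα hβ hne hex
    obtain ⟨γ, hγN, hγr, hγs⟩ := hex
    obtain ⟨hαW, hαsrc, hαuniq⟩ := force1 α hα
    obtain ⟨hβW, hβsrc, hβuniq⟩ := force1 β hβ
    -- γ ∈ N so its base is in W, and γ is forced to be a cycle
    obtain ⟨δ, hδc, hδe, hγδ⟩ := force γ hγN
    have hγc : G.IsCycle hn γ := by rw [hγδ]; exact hδc
    -- source of γ = base of γ = source of α = base of α
    have : G.pathRange h1n β = G.pathRange h1n α := by
      rw [← hβsrc, ← hγs, ← hγc, hγr, hαsrc]
    exact hne (hαuniq β hβ this).symm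
  · intro α hα hex
    obtain ⟨γ, hγN, hγc, hγe, hγr⟩ := hex
    obtain ⟨δ, hδc, hδe, hγδ⟩ := force γ hγN
    rw [hγδ] at hγe
    exact hδe hγe


lemma aux_B_sub [T2Space V] [T2Space E] [FirstCountableTopology V] [FirstCountableTopology E]
    (hsg : G.sg = ∅) {n : ℕ} (hn : 0 < n) {μ : G.Path n} (hμ : μ ∈ G.B n hn) :
    G.pathRange hn μ ∈ G.Vset n hn := by
  have hreg : ∀ v : V, v ∈ G.rg := by
    intro v
    by_contra h
    have hv : v ∈ G.sg := h
    rw [hsg] at hv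
    exact hv
  have hne := G.aux_B_noEnt hn hμ
  obtain ⟨hc, k, hk, N, hNo, hμN, h1, h2⟩ := hμ
  obtain ⟨U, hUo, hμU, hUN⟩ := G.aux_basic hNo hμN
  set m := (k+1)*n with hm
  have hm' : m = k*n + n := by rw [hm, Nat.add_mul, Nat.one_mul]
  have hkn : 0 < k * n := Nat.mul_pos hk hn
  have hmpos : 0 < m := by omega
  -- chain of neighbourhoods via downward induction
  have chain : ∀ j : ℕ, j ≤ m → ∃ W : Set V, IsOpen W ∧
      G.r (μ.1 ⟨(m - j) % n, Nat.mod_lt _ hn⟩) ∈ W ∧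
      ∀ w ∈ W, ∃ f : Fin j → E,
        (∀ t : Fin j, f t ∈ U ⟨((m - j) + (t : ℕ)) % n, Nat.mod_lt _ hn⟩) ∧
        (∀ h0 : 0 < j, G.r (f ⟨0, h0⟩) = w) ∧
        (∀ (t : ℕ) (h : t + 1 < j), G.s (f ⟨t, Nat.lt_of_succ_lt h⟩) = G.r (f ⟨t+1, h⟩)) := by
    intro j
    induction j with
    | zero =>
      intro _
      exact ⟨Set.univ, isOpen_univ, Set.mem_univ _,
        fun w _ => ⟨Fin.elim0, fun t => t.elim0, fun h0 => absurd h0 (by omega),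
          fun t h => absurd h (by omega)⟩⟩
    | succ j ih =>
      intro hj1
      obtain ⟨W', hW'o, hW'v, hW'⟩ := ih (by omega)
      have hsv : G.s (μ.1 ⟨(m - (j+1)) % n, Nat.mod_lt _ hn⟩) ∈ W' := by
        rw [G.aux_wrap hn hc (m - (j+1))]
        have hidx : μ.1 ⟨(m - (j+1) + 1) % n, Nat.mod_lt _ hn⟩
            = μ.1 ⟨(m - j) % n, Nat.mod_lt _ hn⟩ :=
          fin_app_congr μ.1 _ _ (by rw [show m - (j+1) + 1 = m - j by omega])
        rw [hidx]
        exact hW'v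
      have hU'o : IsOpen (U ⟨(m - (j+1)) % n, Nat.mod_lt _ hn⟩ ∩ G.s ⁻¹' W') :=
        (hUo _).inter (hW'o.preimage G.aux_s_cont)
      have hμU' : μ.1 ⟨(m - (j+1)) % n, Nat.mod_lt _ hn⟩ ∈
          U ⟨(m - (j+1)) % n, Nat.mod_lt _ hn⟩ ∩ G.s ⁻¹' W' := ⟨hμU _, hsv⟩
      have hfib : G.r ⁻¹' {G.r (μ.1 ⟨(m - (j+1)) % n, Nat.mod_lt _ hn⟩)} ⊆
          U ⟨(m - (j+1)) % n, Nat.mod_lt _ hn⟩ ∩ G.s ⁻¹' W' := by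
        intro e he
        have hee : e = μ.1 ⟨(m - (j+1)) % n, Nat.mod_lt _ hn⟩ := G.aux_noEnt hne _ e he
        rw [hee]
        exact hμU'
      obtain ⟨W1, hW1o, hvW1, hW1⟩ := G.aux_proper (hreg _).1 hU'o hfib
      obtain ⟨R, hRo, hvR, hR⟩ :=
        G.aux_recv (hreg (G.r (μ.1 ⟨(m - (j+1)) % n, Nat.mod_lt _ hn⟩)))
      refine ⟨W1 ∩ R, hW1o.inter hRo, ⟨hvW1, hvR⟩, ?_⟩
      rintro w ⟨hw1, hw2⟩
      obtain ⟨e, hre⟩ := hR w hw2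
      have heU' : e ∈ U ⟨(m - (j+1)) % n, Nat.mod_lt _ hn⟩ ∩ G.s ⁻¹' W' :=
        hW1 (by rw [Set.mem_preimage, hre]; exact hw1)
      obtain ⟨f', hf'U, hf'r, hf'chain⟩ := hW' (G.s e) heU'.2
      refine ⟨fun t => if h : (t : ℕ) = 0 then e else f' ⟨(t : ℕ) - 1, by omega⟩, ?_, ?_, ?_⟩
      · rintro ⟨tv, htv⟩
        cases tv with
        | zero => exact heU'.1
        | succ t' =>
          have h2' := hf'U ⟨t', by omega⟩
          have hidx : (⟨(m - j + t') % n, Nat.mod_lt _ hn⟩ : Fin n)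
              = ⟨(m - (j+1) + (t'+1)) % n, Nat.mod_lt _ hn⟩ :=
            fin_mk_eq _ _ (by rw [show m - j + t' = m - (j+1) + (t'+1) by omega])
          rw [hidx] at h2'
          exact h2'
      · intro h0
        exact hre
      · intro t h
        cases t with
        | zero => exact (hf'r (by omega)).symm
        | succ t' => exact hf'chain t' (by omega)
  -- apply the chain at j = m
  obtain ⟨W, hWo, hWv, hWf⟩ := chain m le_rfl
  have hWμ : G.pathRange hn μ ∈ W := by
    have hidx : μ.1 ⟨(m - m) % n, Nat.mod_lt _ hn⟩ = μ.1 ⟨0, hn⟩ :=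
      fin_app_congr μ.1 _ _ (by rw [Nat.sub_self, Nat.zero_mod])
    rwa [hidx] at hWv
  refine ⟨W, hWo, hWμ, ?_⟩
  intro w hw
  obtain ⟨f, hfU, hfr, hfch⟩ := hWf w hw
  have hfU' : ∀ (t : ℕ) (ht : t < m), f ⟨t, ht⟩ ∈ U ⟨t % n, Nat.mod_lt _ hn⟩ := by
    intro t ht
    have h3 := hfU ⟨t, ht⟩
    have hidx : (⟨(m - m + t) % n, Nat.mod_lt _ hn⟩ : Fin n) = ⟨t % n, Nat.mod_lt _ hn⟩ :=
      fin_mk_eq _ _ (by rw [Nat.sub_self, Nat.zero_add])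
    rwa [hidx] at h3
  -- the three finite paths
  set α : G.Path (k*n) :=
    ⟨fun t => f ⟨(t : ℕ), by omega⟩, fun t ht => hfch t (by omega)⟩ with hαdef
  set β : G.Path (k*n) :=
    ⟨fun t => f ⟨n + (t : ℕ), by omega⟩, fun t ht => hfch (n + t) (by omega)⟩ with hβdef
  set γ' : G.Path n :=
    ⟨fun t => f ⟨k*n + (t : ℕ), by omega⟩, fun t ht => hfch (k*n + t) (by omega)⟩ with hγ'def
  have hblocksα : G.BlocksIn N α := by
    intro j
    apply hUN
    intro t'
    have hlt : (j : ℕ) * n + (t' : ℕ) < m := by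
      have := block_lt j t'
      omega
    have h3 := hfU' ((j : ℕ) * n + (t' : ℕ)) hlt
    have hidx : (⟨((j : ℕ) * n + (t' : ℕ)) % n, Nat.mod_lt _ hn⟩ : Fin n) = t' :=
      fin_mk_eq _ t'.2 (aux_mod _ _ t'.2)
    rw [hidx] at h3
    exact h3
  have hblocksβ : G.BlocksIn N β := by
    intro j
    apply hUN
    intro t'
    have hlt : n + ((j : ℕ) * n + (t' : ℕ)) < m := by
      have h4 := block_lt j t'
      have h5 : (j : ℕ) + 1 ≤ k := j.2
      have h6 : ((j : ℕ) + 1) * n ≤ k * n := Nat.mul_le_mul_right n h5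
      have h7 : ((j : ℕ) + 1) * n = (j : ℕ) * n + n := by rw [Nat.add_mul, Nat.one_mul]
      omega
    have h3 := hfU' (n + ((j : ℕ) * n + (t' : ℕ))) hlt
    have h8 : n + ((j : ℕ) * n + (t' : ℕ)) = ((j : ℕ) + 1) * n + (t' : ℕ) := by
      rw [Nat.add_mul, Nat.one_mul]; omega
    have hidx : (⟨(n + ((j : ℕ) * n + (t' : ℕ))) % n, Nat.mod_lt _ hn⟩ : Fin n) = t' :=
      fin_mk_eq _ t'.2 (by rw [h8]; exact aux_mod _ _ t'.2)
    rw [hidx] at h3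
    exact h3
  have hγ'N : γ' ∈ N := by
    apply hUN
    intro t'
    have hlt : k*n + (t' : ℕ) < m := by omega
    have h3 := hfU' (k*n + (t' : ℕ)) hlt
    have hidx : (⟨(k*n + (t' : ℕ)) % n, Nat.mod_lt _ hn⟩ : Fin n) = t' :=
      fin_mk_eq _ t'.2 (aux_mod _ _ t'.2)
    rw [hidx] at h3
    exact h3
  have hγ'r : G.pathRange hn γ' = G.pathSource (Nat.mul_pos hk hn) α := by
    show G.r (f ⟨k*n + 0, by omega⟩) = G.s (f ⟨k*n - 1, by omega⟩)
    rw [hfch (k*n - 1) (by omega)]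
    exact (congrArg G.r (fin_app_congr f _ _ (by omega))).symm
  have hγ's : G.pathSource hn γ' = G.pathSource (Nat.mul_pos hk hn) β := by
    show G.s (f ⟨k*n + (n - 1), by omega⟩) = G.s (f ⟨n + (k*n - 1), by omega⟩)
    exact congrArg G.s (fin_app_congr f _ _ (by omega))
  have hαβ : α = β := by
    by_contra hne'
    exact h1 α β hblocksα hblocksβ hne' ⟨γ', hγ'N, hγ'r, hγ's⟩
  have et : ∀ (t : ℕ) (ht : t < k*n) (ht1 : t < m) (ht2 : n + t < m),
      f ⟨t, ht1⟩ = f ⟨n + t, ht2⟩ := by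
    intro t ht ht1 ht2
    exact congrFun (congrArg Subtype.val hαβ) ⟨t, ht⟩
  set γw : G.Path n := ⟨fun t => f ⟨(t : ℕ), by omega⟩, fun t ht => hfch t (by omega)⟩ with hγwdef
  have hγwr : G.pathRange hn γw = w := hfr hmpos
  have hγwc : G.IsCycle hn γw := by
    show G.r (f ⟨0, by omega⟩) = G.s (f ⟨n - 1, by omega⟩)
    rw [hfch (n-1) (by omega)]
    rw [et 0 (by omega) (by omega) (by omega)]
    exact congrArg G.r (fin_app_congr f _ _ (by omega))
  have hγwN : γw ∈ N := by
    apply hUN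
    intro t'
    have h3 := hfU' (t' : ℕ) (by omega)
    have hidx : (⟨(t' : ℕ) % n, Nat.mod_lt _ hn⟩ : Fin n) = t' :=
      fin_mk_eq _ t'.2 (Nat.mod_eq_of_lt t'.2)
    rw [hidx] at h3
    exact h3
  have hγwe : ¬ G.HasEntrance γw := by
    intro hent
    exact h2 (G.auxRep hn k hγwc) (G.auxRep_blocksIn hn hγwc hγwN)
      ⟨γw, hγwN, hγwc, hent, (G.auxRep_source hn hk hγwc).symm⟩
  exact ⟨γw, hγwc, hγwe, hγwr⟩

end TopGraph

open Topology Filter in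
/-- Theorem 3.8, second part: for a topological graph without singular vertices,
`B^n` is closed iff `V_n` is closed. -/
theorem stmt4 {V E : Type} [TopologicalSpace V] [TopologicalSpace E]
    [T2Space V] [T2Space E] [LocallyCompactSpace V] [LocallyCompactSpace E]
    [SecondCountableTopology V] [SecondCountableTopology E]
    (G : TopGraph V E)
    (hsg : G.sg = ∅) (n : ℕ) (hn : 0 < n) :
    IsClosed (G.B n hn) ↔ IsClosed (G.Vset n hn) := by
  have hreg : ∀ v : V, v ∈ G.rg := by
    intro v
    by_contra h
    have hv : v ∈ G.sg := h
    rw [hsg] at hv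
    exact hv
  constructor
  · intro hB
    apply isClosed_of_closure_subset
    intro v hv
    obtain ⟨vs, hvs, hvt⟩ := mem_closure_iff_seq_limit.mp hv
    have hδ : ∀ m : ℕ, ∃ δ : G.Path n,
        G.IsCycle hn δ ∧ ¬ G.HasEntrance δ ∧ G.pathRange hn δ = vs m := by
      intro m
      obtain ⟨W, hWo, hmW, hWp⟩ := hvs m
      exact hWp _ hmW
    choose δ hδc hδe hδr using hδ
    have key : ∀ (j : ℕ), j ≤ n → ∃ φ : ℕ → ℕ, StrictMono φ ∧ ∃ g : Fin j → E,
        ∀ (t : ℕ) (ht : t < j) (ht' : t < n), Filter.Tendsto (fun m => (δ (φ m)).1 ⟨t, ht'⟩)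
          Filter.atTop (𝓝 (g ⟨t, ht⟩)) := by
      intro j
      induction j with
      | zero => exact fun _ => ⟨id, strictMono_id, Fin.elim0, fun t ht _ => absurd ht (by omega)⟩
      | succ j ih =>
        intro hj1
        obtain ⟨φ, hφ, g, hg⟩ := ih (by omega)
        have hjlt : j < n := hj1
        obtain ⟨u, hu⟩ : ∃ u, Filter.Tendsto (fun m => G.r ((δ (φ m)).1 ⟨j, hjlt⟩))
            Filter.atTop (𝓝 u) := by
          rcases Nat.eq_zero_or_pos j with h0 | hpos
          · subst h0
            refine ⟨v, ?_⟩
            have heq : (fun m => G.r ((δ (φ m)).1 ⟨0, hjlt⟩)) = fun m => vs (φ m) :=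
              funext fun m => hδr (φ m)
            rw [heq]
            exact hvt.comp hφ.tendsto_atTop
          · refine ⟨G.s (g ⟨j - 1, by omega⟩), ?_⟩
            have heq : (fun m => G.r ((δ (φ m)).1 ⟨j, hjlt⟩))
                = fun m => G.s ((δ (φ m)).1 ⟨j - 1, by omega⟩) := by
              funext m
              have h5 := (δ (φ m)).2 (j - 1) (by omega)
              rw [h5]
              exact congrArg G.r (TopGraph.fin_app_congr _ _ _ (by omega))
            rw [heq]
            exact (G.aux_s_cont.tendsto _).comp (hg (j-1) (by omega) (by omega))
        obtain ⟨Nu, hNuo, hNu, hKcomp⟩ := (hreg u).1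
        have hev : ∀ᶠ m in Filter.atTop, G.r ((δ (φ m)).1 ⟨j, hjlt⟩) ∈ Nu :=
          hu.eventually (hNuo.mem_nhds hNu)
        obtain ⟨M, hM⟩ := Filter.eventually_atTop.mp hev
        have hmem : ∀ m : ℕ, (δ (φ (M + m))).1 ⟨j, hjlt⟩ ∈ G.r ⁻¹' closure Nu := by
          intro m
          exact subset_closure (hM (M + m) (by omega))
        obtain ⟨a, haK, ψ, hψ, hconv⟩ := hKcomp.isSeqCompact hmem
        have hmono : StrictMono (fun m => M + ψ m) :=
          fun x y hxy => by show M + ψ x < M + ψ y; exact Nat.add_lt_add_left (hψ hxy) M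
        refine ⟨fun m => φ (M + ψ m), hφ.comp hmono,
          fun t => if h : (t : ℕ) < j then g ⟨t, h⟩ else a, ?_⟩
        intro t ht ht'
        by_cases h : t < j
        · simp only [dif_pos h]
          exact (hg t h ht').comp hmono.tendsto_atTop
        · have htj : t = j := by omega
          subst htj
          simp only [dif_neg h]
          exact hconv
    obtain ⟨φ, hφ, g, hg⟩ := key n le_rfl
    have hpath : G.IsPathFn (fun t : Fin n => g t) := by
      intro i hi
      have hA : Filter.Tendsto (fun m => G.s ((δ (φ m)).1 ⟨i, Nat.lt_of_succ_lt hi⟩))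
          Filter.atTop (𝓝 (G.s (g ⟨i, Nat.lt_of_succ_lt hi⟩))) :=
        (G.aux_s_cont.tendsto _).comp (hg i (Nat.lt_of_succ_lt hi) (Nat.lt_of_succ_lt hi))
      have hBq : (fun m => G.s ((δ (φ m)).1 ⟨i, Nat.lt_of_succ_lt hi⟩))
          = fun m => G.r ((δ (φ m)).1 ⟨i+1, hi⟩) :=
        funext fun m => (δ (φ m)).2 i hi
      have hC : Filter.Tendsto (fun m => G.r ((δ (φ m)).1 ⟨i+1, hi⟩))
          Filter.atTop (𝓝 (G.r (g ⟨i+1, hi⟩))) :=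
        (G.r_cont.tendsto _).comp (hg (i+1) hi hi)
      rw [hBq] at hA
      exact tendsto_nhds_unique hA hC
    set γ : G.Path n := ⟨fun t : Fin n => g t, hpath⟩ with hγdef
    have hγr : G.r (g ⟨0, hn⟩) = v := by
      have hA : Filter.Tendsto (fun m => G.r ((δ (φ m)).1 ⟨0, hn⟩))
          Filter.atTop (𝓝 (G.r (g ⟨0, hn⟩))) := (G.r_cont.tendsto _).comp (hg 0 hn hn)
      have hBq : (fun m => G.r ((δ (φ m)).1 ⟨0, hn⟩)) = fun m => vs (φ m) :=
        funext fun m => hδr (φ m)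
      rw [hBq] at hA
      exact tendsto_nhds_unique hA (hvt.comp hφ.tendsto_atTop)
    have hγc : G.IsCycle hn γ := by
      show G.r (g ⟨0, hn⟩) = G.s (g ⟨n-1, Nat.sub_lt hn Nat.one_pos⟩)
      have hA : Filter.Tendsto (fun m => G.s ((δ (φ m)).1 ⟨n-1, Nat.sub_lt hn Nat.one_pos⟩))
          Filter.atTop (𝓝 (G.s (g ⟨n-1, Nat.sub_lt hn Nat.one_pos⟩))) :=
        (G.aux_s_cont.tendsto _).comp (hg (n-1) (Nat.sub_lt hn Nat.one_pos) (Nat.sub_lt hn Nat.one_pos))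
      have hBq : (fun m => G.s ((δ (φ m)).1 ⟨n-1, Nat.sub_lt hn Nat.one_pos⟩)) = fun m => vs (φ m) := by
        funext m
        have h5 : G.pathRange hn (δ (φ m)) = G.pathSource hn (δ (φ m)) := hδc (φ m)
        have h6 := hδr (φ m)
        show G.pathSource hn (δ (φ m)) = vs (φ m)
        rw [← h5]
        exact h6
      rw [hBq] at hA
      rw [hγr]
      exact (tendsto_nhds_unique hA (hvt.comp hφ.tendsto_atTop)).symm
    have hmemB : ∀ m, δ (φ m) ∈ G.B n hn := fun m =>
      G.aux_memB hn (hδc (φ m)) (by rw [hδr (φ m)]; exact hvs (φ m))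
    have htend : Filter.Tendsto (fun m => δ (φ m)) Filter.atTop (𝓝 γ) := by
      refine tendsto_subtype_rng.mpr ?_
      rw [tendsto_pi_nhds]
      intro t
      exact hg t t.2 t.2
    have hγB : γ ∈ G.B n hn :=
      hB.closure_subset (mem_closure_of_tendsto htend (Filter.Eventually.of_forall hmemB))
    have hfin := G.aux_B_sub hsg hn hγB
    rwa [show G.pathRange hn γ = v from hγr] at hfin
  · intro hV
    have hBeq : G.B n hn = {μ : G.Path n | G.IsCycle hn μ} ∩ G.pathRange hn ⁻¹' G.Vset n hn := by
      ext μ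
      constructor
      · intro hμ
        exact ⟨hμ.1, G.aux_B_sub hsg hn hμ⟩
      · rintro ⟨hcμ, hVμ⟩
        exact G.aux_memB hn hcμ hVμ
    rw [hBeq]
    exact (isClosed_eq (G.aux_pathRange_cont hn) (G.aux_pathSource_cont hn)).inter
      (hV.preimage (G.aux_pathRange_cont hn))
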